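/- The ring ℤ of integers, with its natural ordering, is a po-coherent po-ring; concretely, for every n ≥ 1 and every (a₁,…,aₙ) ∈ ℤⁿ, the set {(ξ₁,…,ξₙ) ∈ ℤⁿ | a₁ξ₁ + ⋯ + aₙξₙ ≥ 0 and ξᵢ ≥ 0 for all i} is a finitely generated additive submonoid of ℤⁿ. -/

import Mathlib

noncomputable def auxNatWO : IsWellOrder ℕ (· < ·) := inferInstance

/-- Any submonoid of `(Fin n → ℕ) × ℕ` that is closed under exact subtraction
(when the componentwise order allows it) is finitely generated.  This is the
key consequence of Dickson's lemma. -/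
theorem aux_fg_of_subclosed (n : ℕ) (T : AddSubmonoid ((Fin n → ℕ) × ℕ))
    (hsub : ∀ p ∈ T, ∀ q ∈ T, p ≤ q → ∃ r ∈ T, p + r = q) : T.FG := by
  classical
  -- the ambient type is partially well ordered
  have hpwo : (Set.univ : Set ((Fin n → ℕ) × ℕ)).IsPWO := by
    have h1 : (Set.univ : Set (Fin n → ℕ)).IsPWO := Set.isPWO_of_wellQuasiOrderedLE _
    have h2 : (Set.univ : Set ℕ).IsPWO :=
      (Set.isWF_univ_iff.2 inferInstance).isPWO
    simpa [Set.univ_prod_univ] using h1.prod h2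
  -- the set of minimal nonzero elements of T
  set Min : Set ((Fin n → ℕ) × ℕ) :=
    {p | p ∈ T ∧ p ≠ 0 ∧ ∀ q ∈ T, q ≠ 0 → q ≤ p → q = p} with hMin
  have hMinT : Min ⊆ (T : Set _) := fun p hp => hp.1
  -- Min is an antichain
  have hanti : IsAntichain (· ≤ ·) Min := by
    rintro p hp q hq hne hle
    exact hne (hq.2.2 p hp.1 hp.2.1 hle)
  have hfin : Min.Finite :=
    hanti.finite_of_partiallyWellOrderedOn (hpwo.mono (Set.subset_univ _))
  -- every nonzero element of T lies above a minimal one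
  have hmin_exists : ∀ p ∈ T, p ≠ 0 → ∃ m ∈ Min, m ≤ p := by
    intro p hp hp0
    set T' : Set ((Fin n → ℕ) × ℕ) := {q | q ∈ T ∧ q ≠ 0 ∧ q ≤ p} with hT'
    have hwf : T'.IsWF := (hpwo.mono (Set.subset_univ _)).isWF
    have hne : T'.Nonempty := ⟨p, hp, hp0, le_rfl⟩
    refine ⟨hwf.min hne, ?_, (hwf.min_mem hne).2.2⟩
    obtain ⟨hmT, hm0, hmp⟩ := hwf.min_mem hne
    refine ⟨hmT, hm0, fun q hq hq0 hqm => ?_⟩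
    have hq' : q ∈ T' := ⟨hq, hq0, hqm.trans hmp⟩
    by_contra hne'
    exact hwf.not_lt_min hne hq' (lt_of_le_of_ne hqm hne')
  -- every element of T is in the closure of Min: induction on a measure
  have key : ∀ N : ℕ, ∀ p ∈ T, p.2 + ∑ i, p.1 i ≤ N → p ∈ AddSubmonoid.closure Min := by
    intro N
    induction N with
    | zero =>
      intro p hp hN
      have h2 : p.2 = 0 := by omega
      have h1 : ∀ i, p.1 i = 0 := by
        intro i
        have := Finset.single_le_sum (f := p.1) (fun j _ => Nat.zero_le _)
          (Finset.mem_univ i)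
        omega
      have : p = 0 := by
        ext i
        · exact h1 i
        · exact h2
      rw [this]; exact zero_mem _
    | succ N ih =>
      intro p hp hN
      by_cases hp0 : p = 0
      · rw [hp0]; exact zero_mem _
      obtain ⟨m, hm, hmp⟩ := hmin_exists p hp hp0
      obtain ⟨r, hr, hmr⟩ := hsub m hm.1 p hp hmp
      have hmeas : r.2 + ∑ i, r.1 i ≤ N := by
        have hadd : p.2 + ∑ i, p.1 i = (m.2 + ∑ i, m.1 i) + (r.2 + ∑ i, r.1 i) := by
          rw [← hmr]
          simp [Prod.fst_add, Prod.snd_add, Finset.sum_add_distrib]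
          ring
        have hmpos : 0 < m.2 + ∑ i, m.1 i := by
          rcases Nat.eq_zero_or_pos (m.2 + ∑ i, m.1 i) with h | h
          · exfalso
            apply hm.2.1
            have h2 : m.2 = 0 := by omega
            have h1 : ∀ i, m.1 i = 0 := by
              intro i
              have := Finset.single_le_sum (f := m.1) (fun j _ => Nat.zero_le _)
                (Finset.mem_univ i)
              omega
            ext i
            · exact h1 i
            · exact h2
          · exact h
        omega
      have hrmem := ih r hr hmeas
      have : p = m + r := hmr.symm
      rw [this]
      exact add_mem (AddSubmonoid.subset_closure hm) hrmem
  -- conclude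
  rw [AddSubmonoid.fg_iff]
  refine ⟨Min, le_antisymm ?_ ?_, hfin⟩
  · exact AddSubmonoid.closure_le.2 hMinT
  · intro p hp
    exact key (p.2 + ∑ i, p.1 i) p hp le_rfl

/-- The ring `ℤ` of integers, with its natural ordering, is a po-coherent
po-ring: for every `n ≥ 1` and every `(a₁,…,aₙ) ∈ ℤⁿ`, the solution set
`{(ξ₁,…,ξₙ) ∈ ℤⁿ | a₁ξ₁ + ⋯ + aₙξₙ ≥ 0 and ξᵢ ≥ 0 for all i}` is a finitely generated
additive submonoid of `ℤⁿ`. -/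
theorem int_poCoherent (n : ℕ) (hn : 1 ≤ n) (a : Fin n → ℤ) :
    ∃ P : AddSubmonoid (Fin n → ℤ), P.FG ∧
      (P : Set (Fin n → ℤ)) = {ξ : Fin n → ℤ | 0 ≤ ∑ i, a i * ξ i ∧ ∀ i, 0 ≤ ξ i} := by
  classical
  -- the monoid of solutions encoded in ℕ
  set T : AddSubmonoid ((Fin n → ℕ) × ℕ) :=
    { carrier := {p | (p.2 : ℤ) = ∑ i, a i * (p.1 i : ℤ)}
      zero_mem' := by simp
      add_mem' := by
        intro p q hp hq
        simp only [Set.mem_setOf_eq] at *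
        simp only [Prod.fst_add, Prod.snd_add, Pi.add_apply, Nat.cast_add]
        rw [hp, hq, ← Finset.sum_add_distrib]
        exact Finset.sum_congr rfl fun i _ => by ring } with hT
  have hTfg : T.FG := by
    apply aux_fg_of_subclosed
    intro p hp q hq hle
    have h1 : p.1 ≤ q.1 := hle.1
    have h2 : p.2 ≤ q.2 := hle.2
    refine ⟨(q.1 - p.1, q.2 - p.2), ?_, ?_⟩
    · show ((q.2 - p.2 : ℕ) : ℤ) = ∑ i, a i * ((q.1 - p.1) i : ℤ)
      have hp' : (p.2 : ℤ) = ∑ i, a i * (p.1 i : ℤ) := hp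
      have hq' : (q.2 : ℤ) = ∑ i, a i * (q.1 i : ℤ) := hq
      rw [Nat.cast_sub h2, hp', hq', ← Finset.sum_sub_distrib]
      refine Finset.sum_congr rfl fun i _ => ?_
      have : ((q.1 - p.1) i : ℤ) = (q.1 i : ℤ) - (p.1 i : ℤ) := by
        have := h1 i
        simp [Pi.sub_apply, Nat.cast_sub this]
      rw [this]; ring
    · ext i
      · exact Nat.add_sub_cancel' (h1 i)
      · exact Nat.add_sub_cancel' h2
  -- the additive hom to ℤⁿ
  let f : ((Fin n → ℕ) × ℕ) →+ (Fin n → ℤ) :=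
    { toFun := fun p i => (p.1 i : ℤ)
      map_zero' := by ext i; simp
      map_add' := by
        intro p q; ext i
        simp [Prod.fst_add, Pi.add_apply, Nat.cast_add] }
  refine ⟨T.map f, hTfg.map f, ?_⟩
  ext ξ
  simp only [AddSubmonoid.coe_map, Set.mem_image, Set.mem_setOf_eq]
  constructor
  · rintro ⟨p, hp, rfl⟩
    have hp' : (p.2 : ℤ) = ∑ i, a i * (p.1 i : ℤ) := hp
    constructor
    · show (0 : ℤ) ≤ ∑ i, a i * (f p i)
      have : ∑ i, a i * (f p i) = (p.2 : ℤ) := by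
        rw [hp']; rfl
      rw [this]; exact Int.natCast_nonneg _
    · intro i; exact Int.natCast_nonneg _
  · rintro ⟨hsum, hpos⟩
    refine ⟨(fun i => (ξ i).toNat, (∑ i, a i * ξ i).toNat), ?_, ?_⟩
    · show (((∑ i, a i * ξ i).toNat : ℤ)) = ∑ i, a i * (((ξ _).toNat : ℤ))
      rw [Int.toNat_of_nonneg hsum]
      refine Finset.sum_congr rfl fun i _ => ?_
      rw [Int.toNat_of_nonneg (hpos i)]
    · ext i
      show ((ξ i).toNat : ℤ) = ξ i
      exact Int.toNat_of_nonneg (hpos i)
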